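/- For every natural number ℓ with ℓ = 5 or ℓ ≥ 7, either there exists a level-ℓ junior ghost datum on the theta graph (two vertices, three edges), or ℓ = 12 and there exists a level-12 junior ghost datum on the two-vertex graph with four edges. (Hence for every such ℓ the locus of noncanonical singularities of the moduli space of level-ℓ curves has a component of codimension 3 or 4.) -/

import Mathlib

/-- The operation `a ⊙ m := a * m / gcd(m, ℓ)` (exact division since `gcd(m, ℓ) ∣ m`). -/
def odot (ℓ a m : ℕ) : ℕ := a * m / Nat.gcd m ℓ

/-- A level-`ℓ` junior ghost datum on the theta graph (two vertices joined by three
edges, edges 1 and 3 oriented from the first vertex to the second, edge 2 opposite). -/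
def IsJuniorGhostDatum (ℓ m₁ m₂ m₃ a₁ a₂ a₃ : ℕ) : Prop :=
  m₁ < ℓ ∧ m₂ < ℓ ∧ m₃ < ℓ ∧
  1 ≤ a₁ ∧ a₁ < ℓ ∧ 1 ≤ a₂ ∧ a₂ < ℓ ∧ 1 ≤ a₃ ∧ a₃ < ℓ ∧
  m₂ ≡ m₁ + m₃ [MOD ℓ] ∧
  Nat.gcd m₁ ℓ ∣ a₁ ∧ Nat.gcd m₂ ℓ ∣ a₂ ∧ Nat.gcd m₃ ℓ ∣ a₃ ∧
  odot ℓ a₁ m₁ ≡ odot ℓ a₃ m₃ [MOD ℓ] ∧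
  odot ℓ a₁ m₁ + odot ℓ a₂ m₂ ≡ 0 [MOD ℓ] ∧
  a₁ + a₂ + a₃ < ℓ

/-- A level-`ℓ` junior ghost datum on the two-vertex graph with four edges
(edges 1, 3, 4 oriented from the first vertex to the second, edge 2 opposite). -/
def IsJuniorGhostDatum4 (ℓ m₁ m₂ m₃ m₄ a₁ a₂ a₃ a₄ : ℕ) : Prop :=
  m₁ < ℓ ∧ m₂ < ℓ ∧ m₃ < ℓ ∧ m₄ < ℓ ∧
  1 ≤ a₁ ∧ a₁ < ℓ ∧ 1 ≤ a₂ ∧ a₂ < ℓ ∧ 1 ≤ a₃ ∧ a₃ < ℓ ∧ 1 ≤ a₄ ∧ a₄ < ℓ ∧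
  m₂ ≡ m₁ + m₃ + m₄ [MOD ℓ] ∧
  Nat.gcd m₁ ℓ ∣ a₁ ∧ Nat.gcd m₂ ℓ ∣ a₂ ∧ Nat.gcd m₃ ℓ ∣ a₃ ∧ Nat.gcd m₄ ℓ ∣ a₄ ∧
  odot ℓ a₁ m₁ ≡ odot ℓ a₃ m₃ [MOD ℓ] ∧
  odot ℓ a₁ m₁ ≡ odot ℓ a₄ m₄ [MOD ℓ] ∧
  odot ℓ a₁ m₁ + odot ℓ a₂ m₂ ≡ 0 [MOD ℓ] ∧
  a₁ + a₂ + a₃ + a₄ < ℓ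

lemma odot_scale (k d a m : ℕ) (hk : 0 < k) :
    odot (k * d) (k * a) (k * m) = k * odot d a m := by
  unfold odot
  rw [Nat.gcd_mul_left]
  set g := Nat.gcd m d with hg'
  obtain ⟨c, hc⟩ : g ∣ m := Nat.gcd_dvd_left m d
  rcases Nat.eq_zero_or_pos g with hg | hg
  · simp only [hg, Nat.zero_mul] at hc
    simp [hc, hg]
  have h1 : k * a * (k * m) = (k * a * c) * (k * g) := by rw [hc]; ring
  have h2 : a * m = (a * c) * g := by rw [hc]; ring
  rw [h1, h2, Nat.mul_div_cancel _ (Nat.mul_pos hk hg), Nat.mul_div_cancel _ hg]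
  ring

lemma datum_scale {d m₁ m₂ m₃ a₁ a₂ a₃ : ℕ} (k : ℕ) (hk : 0 < k)
    (h : IsJuniorGhostDatum d m₁ m₂ m₃ a₁ a₂ a₃) :
    IsJuniorGhostDatum (k * d) (k * m₁) (k * m₂) (k * m₃) (k * a₁) (k * a₂) (k * a₃) := by
  obtain ⟨h1, h2, h3, h4, h5, h6, h7, h8, h9, h10, h11, h12, h13, h14, h15, h16⟩ := h
  refine ⟨?_, ?_, ?_, ?_, ?_, ?_, ?_, ?_, ?_, ?_, ?_, ?_, ?_, ?_, ?_, ?_⟩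
  · exact (Nat.mul_lt_mul_left hk).mpr h1
  · exact (Nat.mul_lt_mul_left hk).mpr h2
  · exact (Nat.mul_lt_mul_left hk).mpr h3
  · exact Nat.le_mul_of_pos_left _ hk |>.trans (Nat.mul_le_mul_left k h4)
  · exact (Nat.mul_lt_mul_left hk).mpr h5
  · exact Nat.le_mul_of_pos_left _ hk |>.trans (Nat.mul_le_mul_left k h6)
  · exact (Nat.mul_lt_mul_left hk).mpr h7
  · exact Nat.le_mul_of_pos_left _ hk |>.trans (Nat.mul_le_mul_left k h8)
  · exact (Nat.mul_lt_mul_left hk).mpr h9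
  · have := h10.mul_left' (c := k)
    simpa [Nat.mul_add] using this
  · rw [Nat.gcd_mul_left]; exact Nat.mul_dvd_mul_left k h11
  · rw [Nat.gcd_mul_left]; exact Nat.mul_dvd_mul_left k h12
  · rw [Nat.gcd_mul_left]; exact Nat.mul_dvd_mul_left k h13
  · rw [odot_scale _ _ _ _ hk, odot_scale _ _ _ _ hk]
    exact h14.mul_left' (c := k)
  · rw [odot_scale _ _ _ _ hk, odot_scale _ _ _ _ hk]
    have := h15.mul_left' (c := k)
    simpa [Nat.mul_add] using this
  · have : k * (a₁ + a₂ + a₃) < k * d := (Nat.mul_lt_mul_left hk).mpr h16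
    calc k * a₁ + k * a₂ + k * a₃ = k * (a₁ + a₂ + a₃) := by ring
      _ < k * d := this

lemma datum_odd {d : ℕ} (hd : 5 ≤ d) (hodd : ¬ 2 ∣ d) :
    IsJuniorGhostDatum d 1 2 1 1 ((d - 1) / 2) 1 := by
  have hg2 : Nat.gcd 2 d = 1 := by
    rcases (Nat.dvd_prime Nat.prime_two).mp (Nat.gcd_dvd_left 2 d) with h | h
    · exact h
    · exact absurd (h ▸ Nat.gcd_dvd_right 2 d) hodd
  have ho1 : odot d 1 1 = 1 := by simp [odot]
  have ho2 : odot d ((d - 1) / 2) 2 = (d - 1) / 2 * 2 := by simp [odot, hg2]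
  refine ⟨by omega, by omega, by omega, le_refl 1, by omega, by omega, by omega,
    le_refl 1, by omega, Nat.ModEq.refl 2, by simp, by simp [hg2], by simp, ?_, ?_, by omega⟩
  · rw [ho1]
  · rw [ho1, ho2]
    have he : 1 + (d - 1) / 2 * 2 = d := by omega
    rw [he]
    exact (Nat.modEq_zero_iff_dvd).mpr dvd_rfl

example : IsJuniorGhostDatum 8 1 3 2 2 2 2 := by unfold IsJuniorGhostDatum odot; decide

example : IsJuniorGhostDatum4 12 1 5 2 2 2 2 2 2 := by unfold IsJuniorGhostDatum4 odot; decide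

lemma datum_eight : IsJuniorGhostDatum 8 1 3 2 2 2 2 := by
  unfold IsJuniorGhostDatum odot; decide

theorem exists_junior_ghost_datum_three_or_four_edges (ℓ : ℕ) (h : ℓ = 5 ∨ 7 ≤ ℓ) :
    (∃ m₁ m₂ m₃ a₁ a₂ a₃ : ℕ, IsJuniorGhostDatum ℓ m₁ m₂ m₃ a₁ a₂ a₃) ∨
    (ℓ = 12 ∧ ∃ m₁ m₂ m₃ m₄ a₁ a₂ a₃ a₄ : ℕ,
      IsJuniorGhostDatum4 12 m₁ m₂ m₃ m₄ a₁ a₂ a₃ a₄) := by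
  by_cases h12 : ℓ = 12
  · right
    exact ⟨h12, 1, 5, 2, 2, 2, 2, 2, 2, by unfold IsJuniorGhostDatum4 odot; decide⟩
  left
  have hℓ0 : ℓ ≠ 0 := by omega
  obtain ⟨v, t, hodd, hmul⟩ : ∃ v t, ¬ 2 ∣ t ∧ 2 ^ v * t = ℓ :=
    ⟨_, _, Nat.not_dvd_ordCompl Nat.prime_two hℓ0,
      Nat.ordProj_mul_ordCompl_eq_self ℓ 2⟩
  have hkpos : 0 < 2 ^ v := Nat.pow_pos (by norm_num)
  by_cases ht5 : 5 ≤ t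
  · refine ⟨2 ^ v * 1, 2 ^ v * 2, 2 ^ v * 1, 2 ^ v * 1, 2 ^ v * ((t - 1) / 2), 2 ^ v * 1, ?_⟩
    rw [← hmul]
    exact datum_scale _ hkpos (datum_odd ht5 hodd)
  · -- t ∈ {1, 3}, so 8 ∣ ℓ and ℓ ≠ 12 forces v ≥ 3
    have htpos : 0 < t := by
      rcases Nat.eq_zero_or_pos t with h0 | h0
      · exfalso; rw [h0, Nat.mul_zero] at hmul; omega
      · exact h0
    have ht13 : t = 1 ∨ t = 3 := by omega
    have hv3 : 3 ≤ v := by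
      by_contra hv'
      rcases ht13 with h1 | h1 <;> subst h1 <;>
        (push_neg at hv'; interval_cases v <;> omega)
    have hℓ : ℓ = (2 ^ (v - 3) * t) * 8 := by
      rw [← hmul]
      have : 2 ^ v = 2 ^ (v - 3) * 8 := by
        rw [show v = (v - 3) + 3 by omega, pow_add]
        norm_num
      rw [this]; ring
    set k := 2 ^ (v - 3) * t with hk
    refine ⟨k * 1, k * 3, k * 2, k * 2, k * 2, k * 2, ?_⟩
    rw [hℓ, mul_comm k 8, mul_comm 8 k]
    exact datum_scale _ (Nat.mul_pos (Nat.pow_pos (by norm_num)) htpos) datum_eight
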